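/- For every m ≥ 1, the group homomorphism i_m : G_m → G_{m+1} determined by s_i ↦ s_i for i = 0, …, m is injective. -/

import Mathlib

/-- Iterated exponential: `E 0 n = n`, `E (m+1) n = 2 ^ E m n`. -/
def E : ℕ → ℕ → ℕ
  | 0, n => n
  | m + 1, n => 2 ^ E m n

/-- `Preceq f g` iff there is `C > 0` with `f n ≤ C * g (C*n + C) + C*n + C` for all `n`. -/
def Preceq (f g : ℕ → ℕ) : Prop :=
  ∃ C : ℕ, 0 < C ∧ ∀ n : ℕ, f n ≤ C * g (C * n + C) + C * n + C

/-- Defining relations of the `m`-th iterated Baumslag–Solitar group: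
`s_{i+1} s_i s_{i+1}⁻¹ = s_i²` for `i = 0, …, m-1`. -/
def bsRels (m : ℕ) : Set (FreeGroup (Fin (m + 1))) :=
  Set.range (fun i : Fin m =>
    FreeGroup.of i.succ * FreeGroup.of i.castSucc * (FreeGroup.of i.succ)⁻¹ *
      (FreeGroup.of i.castSucc ^ 2)⁻¹)

/-- The `m`-th iterated Baumslag–Solitar group. -/
abbrev IterBS (m : ℕ) := PresentedGroup (bsRels m)

/-- The generator `s_i` of `IterBS m`. -/
def sg {m : ℕ} (i : Fin (m + 1)) : IterBS m := PresentedGroup.of i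

/-- The element of `IterBS m` represented by a word on the generators and their inverses. -/
def evalWord {m : ℕ} (w : List (Fin (m + 1) × Bool)) : IterBS m :=
  (w.map (fun p => if p.2 then sg p.1 else (sg p.1)⁻¹)).prod

/-- Word length of `g ∈ IterBS m` with respect to the generators `s_0, …, s_m`. -/
noncomputable def wl {m : ℕ} (g : IterBS m) : ℕ :=
  sInf { n | ∃ w : List (Fin (m + 1) × Bool), w.length = n ∧ evalWord w = g }

/-- The minimal word length of a conjugator taking `u` to `v`. -/
noncomputable def cLen {m : ℕ} (u v : IterBS m) : ℕ :=
  sInf { n | ∃ γ : IterBS m, γ * u * γ⁻¹ = v ∧ wl γ = n }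

/-- The conjugator length function of `IterBS m`. -/
noncomputable def CLGm (m : ℕ) (n : ℕ) : ℕ :=
  sSup { c | ∃ u v : List (Fin (m + 1) × Bool),
    u.length + v.length ≤ n ∧
    (∃ γ : IterBS m, γ * evalWord u * γ⁻¹ = evalWord v) ∧
    c = cLen (evalWord u) (evalWord v) }

namespace IterBSAux

lemma rel_eq_one {M : ℕ} (i : Fin M) :
    sg i.succ * sg i.castSucc * (sg i.succ)⁻¹ * ((sg i.castSucc) ^ 2)⁻¹ = 1 := by
  have h : PresentedGroup.mk (bsRels M)
      (FreeGroup.of i.succ * FreeGroup.of i.castSucc * (FreeGroup.of i.succ)⁻¹ *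
        (FreeGroup.of i.castSucc ^ 2)⁻¹) = 1 := by
    show (QuotientGroup.mk _ : IterBS M) = 1
    rw [QuotientGroup.eq_one_iff]
    exact Subgroup.subset_normalClosure ⟨i, rfl⟩
  simpa [map_mul, map_inv, map_pow, sg, PresentedGroup.of] using h

lemma rel_conj {M : ℕ} (i : Fin M) :
    sg i.succ * sg i.castSucc * (sg i.succ)⁻¹ = (sg i.castSucc) ^ 2 := by
  exact mul_inv_eq_one.mp (rel_eq_one i)

end IterBSAux

variable {m : ℕ}

/-- degree map sending `s_m ↦ 1`, others to `0`. -/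
noncomputable def deg : IterBS m →* Multiplicative ℤ :=
  PresentedGroup.toGroup (f := fun i : Fin (m+1) =>
      if i = Fin.last m then Multiplicative.ofAdd (1 : ℤ) else 1) (by
    rintro r ⟨i, rfl⟩
    have hne : i.castSucc ≠ Fin.last m := (Fin.castSucc_lt_last i).ne
    simp [map_mul, map_inv, map_pow, hne])

lemma deg_t : (deg (sg (Fin.last m)) : Multiplicative ℤ) = Multiplicative.ofAdd 1 := by
  simp [deg, sg, PresentedGroup.toGroup.of]

lemma not_finOrder_t : ¬ IsOfFinOrder (sg (Fin.last m)) := by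
  intro h
  obtain ⟨n, hn, h1⟩ := h.exists_pow_eq_one
  have h2 := congrArg deg h1
  simp only [map_pow, deg_t, map_one] at h2
  have h3 : (n : ℤ) • (1 : ℤ) = 0 := by
    have := congrArg Multiplicative.toAdd h2
    simpa [← ofAdd_nsmul] using this
  simp at h3
  omega

lemma t_zpow_injective : Function.Injective (fun n : ℤ => sg (Fin.last m) ^ n) :=
  injective_zpow_iff_not_isOfFinOrder.2 not_finOrder_t

lemma sq_zpow_comm (g : IterBS m) (k : ℤ) : (g ^ k) ^ 2 = (g ^ 2) ^ k := by
  rw [← zpow_natCast (g ^ k) 2, ← zpow_mul, ← zpow_natCast g 2, ← zpow_mul, mul_comm]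

lemma sq_zpow_eq (g : IterBS m) (k : ℤ) : (g ^ 2) ^ k = g ^ (2 * k) := by
  rw [← zpow_natCast g 2, ← zpow_mul]; norm_num

/-- the squaring homomorphism `⟨t⟩ →* ⟨t²⟩`. -/
def sqHom : Subgroup.zpowers (sg (Fin.last m)) →* Subgroup.zpowers (sg (Fin.last m) ^ 2) where
  toFun a := ⟨(a : IterBS m) ^ 2, by
    obtain ⟨k, hk⟩ := a.2
    simp only at hk
    exact ⟨k, by rw [← hk, sq_zpow_comm]⟩⟩
  map_one' := by ext; simp
  map_mul' a b := by
    ext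
    obtain ⟨j, hj⟩ := a.2
    obtain ⟨k, hk⟩ := b.2
    simp only at hj hk
    push_cast
    rw [← hj, ← hk, ← zpow_add, sq_zpow_comm, zpow_add, sq_zpow_comm, sq_zpow_comm]

lemma sqHom_bijective : Function.Bijective (sqHom (m := m)) := by
  constructor
  · intro a b hab
    obtain ⟨j, hj⟩ := a.2
    obtain ⟨k, hk⟩ := b.2
    simp only at hj hk
    have h1 : ((a : IterBS m)) ^ 2 = (b : IterBS m) ^ 2 := congrArg Subtype.val hab
    have h2 : (sg (Fin.last m)) ^ (2 * j) = (sg (Fin.last m)) ^ (2 * k) := by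
      rw [← sq_zpow_eq, ← sq_zpow_eq, ← sq_zpow_comm, ← sq_zpow_comm, hj, hk]
      exact h1
    have := t_zpow_injective h2
    have hjk : j = k := by omega
    ext
    rw [← hj, ← hk, hjk]
  · rintro ⟨b, k, hk⟩
    simp only at hk
    refine ⟨⟨sg (Fin.last m) ^ k, ⟨k, rfl⟩⟩, ?_⟩
    ext
    show (sg (Fin.last m) ^ k) ^ 2 = b
    rw [← hk, sq_zpow_comm]

/-- The isomorphism `⟨t⟩ ≃* ⟨t²⟩`, `t ↦ t²`. -/
noncomputable def sqEquiv :
    Subgroup.zpowers (sg (Fin.last m)) ≃* Subgroup.zpowers (sg (Fin.last m) ^ 2) :=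
  MulEquiv.ofBijective sqHom sqHom_bijective

lemma sqEquiv_apply (a : Subgroup.zpowers (sg (Fin.last m))) :
    (sqEquiv a : IterBS m) = (a : IterBS m) ^ 2 := rfl

/-- The inclusion `IterBS m →* IterBS (m+1)`, `s_i ↦ s_i`. -/
noncomputable def incl : IterBS m →* IterBS (m + 1) :=
  PresentedGroup.toGroup (f := fun i : Fin (m + 1) => sg i.castSucc) (by
    rintro r ⟨i, rfl⟩
    simp only [map_mul, map_inv, map_pow, FreeGroup.lift_apply_of]
    rw [← Fin.succ_castSucc]
    exact IterBSAux.rel_eq_one i.castSucc)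

lemma incl_sg (i : Fin (m + 1)) : incl (sg i) = sg i.castSucc :=
  PresentedGroup.toGroup.of _

/-- The map `IterBS (m+1) →* HNNExtension (IterBS m) ⟨t⟩ ⟨t²⟩ sqEquiv`. -/
noncomputable def toHNN : IterBS (m + 1) →*
    HNNExtension (IterBS m) (Subgroup.zpowers (sg (Fin.last m)))
      (Subgroup.zpowers (sg (Fin.last m) ^ 2)) sqEquiv :=
  PresentedGroup.toGroup
    (f := fun j : Fin (m + 2) =>
      if h : (j : ℕ) < m + 1 then HNNExtension.of (sg ⟨j, h⟩) else HNNExtension.t) (by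
    rintro r ⟨i, rfl⟩
    simp only [map_mul, map_inv, map_pow, FreeGroup.lift_apply_of]
    have hc : ((i.castSucc : Fin (m + 2)) : ℕ) < m + 1 := by simp [i.isLt]
    rw [dif_pos hc]
    have hceq : (⟨(i.castSucc : Fin (m + 2)), hc⟩ : Fin (m + 1)) = i := by
      apply Fin.ext; simp
    rw [hceq]
    by_cases hi : (i : ℕ) < m
    · have hs : ((i.succ : Fin (m + 2)) : ℕ) < m + 1 := by simp [Fin.val_succ]; omega
      rw [dif_pos hs]
      set i' : Fin m := ⟨(i : ℕ), hi⟩ with hi'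
      have h1 : (⟨(i.succ : Fin (m + 2)), hs⟩ : Fin (m + 1)) = i'.succ := by
        apply Fin.ext; simp [Fin.val_succ, hi']
      have h2 : i = i'.castSucc := by apply Fin.ext; simp [hi']
      rw [h1, h2, ← map_pow, ← map_inv, ← map_inv, ← map_mul, ← map_mul, ← map_mul,
        IterBSAux.rel_eq_one i', map_one]
    · have hlast : i = Fin.last m := by
        apply Fin.ext
        have := i.isLt
        simp only [Fin.val_last]
        omega
      subst hlast
      have hs : ¬ ((((Fin.last m).succ : Fin (m + 2)) : ℕ) < m + 1) := by
        simp [Fin.val_succ]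
      rw [dif_neg hs]
      have key := HNNExtension.equiv_eq_conj (φ := sqEquiv)
        ⟨sg (Fin.last m), Subgroup.mem_zpowers _⟩
      rw [sqEquiv_apply] at key
      simp only at key
      rw [← key, ← map_pow]
      simp
    )

lemma toHNN_comp_incl : (toHNN (m := m)).comp incl = HNNExtension.of := by
  apply PresentedGroup.ext
  intro i
  show toHNN (incl (sg i)) = HNNExtension.of (sg i)
  rw [incl_sg]
  show PresentedGroup.toGroup _ (PresentedGroup.of _) = _
  rw [PresentedGroup.toGroup.of]
  have hc : ((i.castSucc : Fin (m + 2)) : ℕ) < m + 1 := by simp [i.isLt]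
  rw [dif_pos hc]
  have heq : (⟨((i.castSucc : Fin (m + 2)) : ℕ), hc⟩ : Fin (m + 1)) = i := Fin.ext (by simp)
  rw [heq]

private theorem iterBS_inclusion_injective_aux (m : ℕ) (hm : 1 ≤ m) :
    ∃ φ : IterBS m →* IterBS (m + 1),
      (∀ i : Fin (m + 1), φ (sg i) = sg i.castSucc) ∧ Function.Injective φ := by
  refine ⟨incl, fun i => incl_sg i, ?_⟩
  intro a b hab
  apply HNNExtension.of_injective (φ := sqEquiv (m := m))
  have h1 : (toHNN.comp incl) a = (toHNN.comp incl) b := by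
    simp only [MonoidHom.comp_apply, hab]
  rwa [toHNN_comp_incl] at h1

/-- For every `m ≥ 1`, the homomorphism `i_m : G_m → G_{m+1}` determined by
`s_i ↦ s_i` is injective. -/
theorem iterBS_inclusion_injective (m : ℕ) (hm : 1 ≤ m) :
    ∃ φ : IterBS m →* IterBS (m + 1),
      (∀ i : Fin (m + 1), φ (sg i) = sg i.castSucc) ∧ Function.Injective φ := by
  exact iterBS_inclusion_injective_aux m hm
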